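/- The max-relative entropy is monotone under quantum channels: for density matrices ρ, σ with supp(ρ) ⊆ supp(σ) and any completely positive trace-preserving map E, D_max(E(ρ)‖E(σ)) ≤ D_max(ρ‖σ), where D_max(ρ‖σ) = inf{λ ∈ ℝ : ρ ≤ 2^λ σ}. -/

import Mathlib

open Matrix BigOperators Classical ComplexOrder

noncomputable section

variable {n : Type*} [Fintype n] [DecidableEq n]

/-- positive-semidefinite square root, extended by 0. -/
noncomputable def msqrt (A : Matrix n n ℂ) : Matrix n n ℂ :=
  if h : A.PosSemidef then
    (h.1.eigenvectorUnitary : Matrix n n ℂ) *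
      diagonal ((↑) ∘ (Real.sqrt ·) ∘ h.1.eigenvalues) *
      (star h.1.eigenvectorUnitary : Matrix n n ℂ)
  else 0

/-- trace norm ‖X‖₁ = Tr √(XᴴX). -/
noncomputable def traceNorm (X : Matrix n n ℂ) : ℝ :=
  (msqrt (Xᴴ * X)).trace.re

/-- fidelity F(ρ,σ) = ‖√ρ√σ‖₁. -/
noncomputable def fidelity (ρ σ : Matrix n n ℂ) : ℝ :=
  traceNorm (msqrt ρ * msqrt σ)

/-- purified distance. -/
noncomputable def purifiedDist (ρ σ : Matrix n n ℂ) : ℝ :=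
  Real.sqrt (1 - (fidelity ρ σ)^2)

def IsDensityMatrix (ρ : Matrix n n ℂ) : Prop := ρ.PosSemidef ∧ ρ.trace = 1

/-- max-relative entropy. -/
noncomputable def Dmax (ρ σ : Matrix n n ℂ) : ℝ :=
  sInf {l : ℝ | ((((2:ℝ)^l : ℝ) : ℂ) • σ - ρ).PosSemidef}

/-- smooth hypothesis testing divergence. -/
noncomputable def DH (ε : ℝ) (ρ τ : Matrix n n ℂ) : ℝ :=
  sSup {r : ℝ | ∃ P : Matrix n n ℂ, P.PosSemidef ∧ ((1 : Matrix n n ℂ) - P).PosSemidef ∧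
    1 - ε ≤ ((P * ρ).trace).re ∧ r = - Real.logb 2 ((P * τ).trace).re}

/-- functional calculus for hermitian matrices (0 otherwise). -/
noncomputable def hermCFC (f : ℝ → ℝ) (A : Matrix n n ℂ) : Matrix n n ℂ :=
  if h : A.IsHermitian then
    (Matrix.IsHermitian.eigenvectorUnitary h : Matrix n n ℂ) *
      Matrix.diagonal (fun i => (f (h.eigenvalues i) : ℂ)) *
      (star (Matrix.IsHermitian.eigenvectorUnitary h : Matrix n n ℂ))
  else 0

/-- von Neumann entropy (base 2). -/
noncomputable def vnEntropy (ρ : Matrix n n ℂ) : ℝ :=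
  if h : ρ.IsHermitian then -∑ i, (h.eigenvalues i) * Real.logb 2 (h.eigenvalues i) else 0

end
section helpers
variable {k : Type*} [Fintype k] [DecidableEq k]

lemma herm_quad_star {M : Matrix k k ℂ} (hM : M.IsHermitian) (x : k → ℂ) :
    star (star x ⬝ᵥ (M *ᵥ x)) = star x ⬝ᵥ (M *ᵥ x) := by
  conv_lhs => rw [star_dotProduct, star_star, star_mulVec]
  rw [Matrix.dotProduct_mulVec, hM.eq]

lemma herm_quad_im {M : Matrix k k ℂ} (hM : M.IsHermitian) (x : k → ℂ) :
    (star x ⬝ᵥ (M *ᵥ x)).im = 0 := by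
  have h := congrArg Complex.im (herm_quad_star hM x)
  simp only [Complex.star_def, Complex.conj_im] at h
  linarith

lemma posSemidef_of_re {M : Matrix k k ℂ} (hM : M.IsHermitian)
    (h : ∀ x : k → ℂ, 0 ≤ (star x ⬝ᵥ (M *ᵥ x)).re) : M.PosSemidef := by
  refine Matrix.PosSemidef.of_dotProduct_mulVec_nonneg hM fun x => ?_
  rw [Complex.le_def]
  simpa [herm_quad_im hM x] using h x

lemma psd_trace_re_nonneg {M : Matrix k k ℂ} (hM : M.PosSemidef) : 0 ≤ M.trace.re := by
  rw [Matrix.trace, Complex.re_sum]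
  refine Finset.sum_nonneg fun i _ => ?_
  have := hM.re_dotProduct_nonneg (Pi.single i 1)
  simpa [dotProduct, Matrix.mulVec_single, Pi.single_apply, apply_ite,
    Finset.sum_ite_eq', Matrix.diag] using this

lemma re_quad_diagonal (μ : k → ℝ) (x : k → ℂ) :
    (star x ⬝ᵥ ((Matrix.diagonal fun i => (μ i : ℂ)) *ᵥ x)).re
      = ∑ i, μ i * Complex.normSq (x i) := by
  rw [dotProduct, Complex.re_sum]
  congr 1; funext i
  rw [Matrix.mulVec_diagonal]
  have : star x i * ((μ i : ℂ) * x i) = ((μ i * Complex.normSq (x i) : ℝ) : ℂ) := by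
    simp only [Pi.star_apply, Complex.star_def]
    rw [Complex.ofReal_mul, Complex.normSq_eq_conj_mul_self]
    ring
  rw [this, Complex.ofReal_re]

end helpers

section more
variable {k : Type*} [Fintype k] [DecidableEq k]

set_option maxHeartbeats 1000000 in
lemma psd_quad_le_trace {M : Matrix k k ℂ} (hM : M.PosSemidef) (x : k → ℂ) :
    (star x ⬝ᵥ (M *ᵥ x)).re ≤ M.trace.re * ∑ i, Complex.normSq (x i) := by
  have hH := hM.1
  set V : Matrix k k ℂ := (hH.eigenvectorUnitary : Matrix k k ℂ) with hV
  set ν := hH.eigenvalues with hν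
  set y : k → ℂ := star V *ᵥ x with hy
  have hstary : star y = star x ᵥ* V := by
    rw [hy, star_mulVec, Matrix.star_eq_conjTranspose, conjTranspose_conjTranspose]
  have hVsV : star V * V = 1 := Matrix.mem_unitaryGroup_iff'.mp hH.eigenvectorUnitary.2
  have hVVs : V * star V = 1 := Matrix.mem_unitaryGroup_iff.mp hH.eigenvectorUnitary.2
  -- quadratic form in eigenbasis
  have hquad : star x ⬝ᵥ (M *ᵥ x)
      = star y ⬝ᵥ ((Matrix.diagonal fun i => (ν i : ℂ)) *ᵥ y) := by
    conv_lhs => rw [hH.spectral_theorem, Unitary.conjStarAlgAut_apply]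
    rw [← Matrix.mulVec_mulVec, ← Matrix.mulVec_mulVec, Matrix.dotProduct_mulVec (star x),
      ← hstary]
    rfl
  -- norms preserved
  have hnorm : ∑ i, Complex.normSq (y i) = ∑ i, Complex.normSq (x i) := by
    have h1 : star y ⬝ᵥ y = star x ⬝ᵥ x := by
      rw [hstary, hy, ← Matrix.dotProduct_mulVec, Matrix.mulVec_mulVec, hVVs, Matrix.one_mulVec]
    have h2 : ∀ z : k → ℂ, star z ⬝ᵥ z = ((∑ i, Complex.normSq (z i) : ℝ) : ℂ) := by
      intro z
      rw [dotProduct]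
      push_cast
      congr 1; funext i
      rw [Complex.normSq_eq_conj_mul_self]; rfl
    have := h1
    rw [h2 y, h2 x] at this
    exact_mod_cast this
  -- trace is the sum of eigenvalues
  have htr : M.trace.re = ∑ i, ν i := by
    have : M.trace = (Matrix.diagonal fun i => (ν i : ℂ)).trace := by
      conv_lhs => rw [hH.spectral_theorem, Unitary.conjStarAlgAut_apply]
      rw [Matrix.trace_mul_cycle, ← hV, hVsV, Matrix.one_mul]
      rfl
    rw [this, Matrix.trace_diagonal, Complex.re_sum]
    simp
  rw [hquad, re_quad_diagonal, htr, ← hnorm]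
  have hvnn : ∀ i, 0 ≤ ν i := hM.eigenvalues_nonneg
  calc ∑ i, ν i * Complex.normSq (y i)
      ≤ ∑ i, ν i * ∑ j, Complex.normSq (y j) := by
        refine Finset.sum_le_sum fun i _ => ?_
        refine mul_le_mul_of_nonneg_left ?_ (hvnn i)
        exact Finset.single_le_sum (fun j _ => Complex.normSq_nonneg _) (Finset.mem_univ i)
    _ = (∑ i, ν i) * ∑ j, Complex.normSq (y j) := by rw [Finset.sum_mul]

end more

section exist
variable {k : Type*} [Fintype k] [DecidableEq k]

set_option maxHeartbeats 1000000 in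
lemma exists_scale {ρ σ : Matrix k k ℂ} (hρ : ρ.PosSemidef) (hσ : σ.PosSemidef)
    (hsupp : ∀ v : k → ℂ, σ *ᵥ v = 0 → ρ *ᵥ v = 0) :
    ∃ c : ℝ, 0 ≤ c ∧ (((c : ℝ) : ℂ) • σ - ρ).PosSemidef := by
  have hH := hσ.1
  set U : Matrix k k ℂ := (hH.eigenvectorUnitary : Matrix k k ℂ) with hU
  set μ := hH.eigenvalues with hμ
  have hUsU : star U * U = 1 := Matrix.mem_unitaryGroup_iff'.mp hH.eigenvectorUnitary.2
  have hUUs : U * star U = 1 := Matrix.mem_unitaryGroup_iff.mp hH.eigenvectorUnitary.2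
  set D : Matrix k k ℂ := Matrix.diagonal (fun i => (μ i : ℂ)) with hD
  set S : Matrix k k ℂ := star U * ρ * U with hS
  have hSpsd : S.PosSemidef := by
    rw [hS, Matrix.star_eq_conjTranspose]
    exact hρ.conjTranspose_mul_mul_same U
  have hμnn : ∀ i, 0 ≤ μ i := hσ.eigenvalues_nonneg
  -- columns of S in the kernel directions vanish
  have hcol : ∀ j, μ j = 0 → ∀ i, S i j = 0 := by
    intro j hj i
    have hb : σ *ᵥ ⇑(hH.eigenvectorBasis j) = 0 := by
      rw [hH.mulVec_eigenvectorBasis, ← hμ, hj]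
      simp
    have hρb : ρ *ᵥ ⇑(hH.eigenvectorBasis j) = 0 := hsupp _ hb
    have hcol' : S *ᵥ Pi.single j 1 = 0 := by
      have h2 : U *ᵥ Pi.single j 1 = ⇑(hH.eigenvectorBasis j) := hH.eigenvectorUnitary_mulVec j
      rw [hS, ← Matrix.mulVec_mulVec, ← Matrix.mulVec_mulVec, h2, hρb, Matrix.mulVec_zero]
    have := congrFun hcol' i
    simpa [Matrix.mulVec_single] using this
  have hrow : ∀ i, μ i = 0 → ∀ j, S i j = 0 := by
    intro i hi j
    have h1 : S i j = star (S j i) := by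
      conv_lhs => rw [← hSpsd.1]
      rfl
    rw [h1, hcol i hi j, star_zero]
  -- the constant
  set g : k → ℝ := fun i => if μ i = 0 then 0 else (μ i)⁻¹ with hg
  have hgnn : ∀ i, 0 ≤ g i := fun i => by
    by_cases h : μ i = 0 <;> simp [hg, h, inv_nonneg.mpr (hμnn i)]
  have htrnn : 0 ≤ S.trace.re := psd_trace_re_nonneg hSpsd
  have hgsumnn : 0 ≤ ∑ i, g i := Finset.sum_nonneg fun i _ => hgnn i
  set c : ℝ := S.trace.re * ∑ i, g i with hc
  have hcnn : 0 ≤ c := mul_nonneg htrnn hgsumnn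
  refine ⟨c, hcnn, ?_⟩
  -- positive semidefiniteness of c • D - S
  have hDpsd : D.PosSemidef := by
    rw [hD]
    refine Matrix.PosSemidef.diagonal fun i => ?_
    show (0 : ℂ) ≤ (μ i : ℂ)
    exact_mod_cast hμnn i
  have hM'H : (((c : ℝ) : ℂ) • D - S).IsHermitian := by
    refine Matrix.IsHermitian.sub ?_ hSpsd.1
    rw [Matrix.IsHermitian, Matrix.conjTranspose_smul, hDpsd.1.eq, Complex.star_def,
      Complex.conj_ofReal]
  have hM'psd : (((c : ℝ) : ℂ) • D - S).PosSemidef := by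
    refine posSemidef_of_re hM'H fun x => ?_
    have hexp : star x ⬝ᵥ (((((c : ℝ) : ℂ) • D - S)) *ᵥ x)
        = ((c : ℝ) : ℂ) * (star x ⬝ᵥ (D *ᵥ x)) - star x ⬝ᵥ (S *ᵥ x) := by
      rw [Matrix.sub_mulVec, dotProduct_sub, Matrix.smul_mulVec,
        dotProduct_smul, smul_eq_mul]
    rw [hexp, Complex.sub_re, Complex.re_ofReal_mul]
    have hQd : (star x ⬝ᵥ (D *ᵥ x)).re = ∑ i, μ i * Complex.normSq (x i) := by
      rw [hD]; exact re_quad_diagonal μ x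
    set Qsum : ℝ := ∑ i, μ i * Complex.normSq (x i) with hQsum
    have hQsumnn : 0 ≤ Qsum :=
      Finset.sum_nonneg fun i _ => mul_nonneg (hμnn i) (Complex.normSq_nonneg _)
    set x' : k → ℂ := fun i => if μ i = 0 then 0 else x i with hx'
    have h1 : S *ᵥ x = S *ᵥ x' := by
      funext i
      simp only [Matrix.mulVec, dotProduct]
      refine Finset.sum_congr rfl fun j _ => ?_
      by_cases hj : μ j = 0
      · simp [hx', hj, hcol j hj i]
      · simp [hx', hj]
    have hSx'zero : ∀ i, μ i = 0 → (S *ᵥ x') i = 0 := by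
      intro i hi
      show ∑ j, S i j * x' j = 0
      refine Finset.sum_eq_zero fun j _ => ?_
      rw [hrow i hi j, zero_mul]
    have h2 : star x ⬝ᵥ (S *ᵥ x') = star x' ⬝ᵥ (S *ᵥ x') := by
      simp only [dotProduct]
      refine Finset.sum_congr rfl fun i _ => ?_
      by_cases hi : μ i = 0
      · rw [hSx'zero i hi, mul_zero, mul_zero]
      · simp [hx', hi]
    have hQs : (star x ⬝ᵥ (S *ᵥ x)).re ≤ c * Qsum := by
      rw [h1, h2]
      calc (star x' ⬝ᵥ (S *ᵥ x')).re
          ≤ S.trace.re * ∑ i, Complex.normSq (x' i) := psd_quad_le_trace hSpsd x'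
        _ ≤ S.trace.re * ((∑ i, g i) * Qsum) := by
            refine mul_le_mul_of_nonneg_left ?_ htrnn
            calc ∑ i, Complex.normSq (x' i)
                ≤ ∑ i, g i * Qsum := by
                  refine Finset.sum_le_sum fun i _ => ?_
                  by_cases hi : μ i = 0
                  · simp [hx', hg, hi]
                  · have hpos : 0 < μ i := lt_of_le_of_ne (hμnn i) (Ne.symm hi)
                    have hsingle : μ i * Complex.normSq (x i) ≤ Qsum :=
                      Finset.single_le_sum
                        (fun j _ => mul_nonneg (hμnn j) (Complex.normSq_nonneg _))
                        (Finset.mem_univ i)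
                    have : Complex.normSq (x i) = (μ i)⁻¹ * (μ i * Complex.normSq (x i)) := by
                      field_simp
                    rw [hx', hg]
                    simp only [hi, if_false]
                    rw [this]
                    exact mul_le_mul_of_nonneg_left hsingle (inv_nonneg.mpr (hμnn i))
              _ = (∑ i, g i) * Qsum := by rw [Finset.sum_mul]
        _ = c * Qsum := by rw [hc, mul_assoc]
    rw [hQd]
    linarith
  -- transfer back through the unitary
  have hUDU : U * D * star U = σ := by
    conv_rhs => rw [hH.spectral_theorem, Unitary.conjStarAlgAut_apply]
    rw [← hU, hD]
    rfl
  have hUSU : U * S * star U = ρ := by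
    rw [hS]
    simp only [← Matrix.mul_assoc]
    rw [hUUs, Matrix.one_mul, Matrix.mul_assoc, hUUs, Matrix.mul_one]
  have key : (((c : ℝ) : ℂ) • σ - ρ) = U * (((c : ℝ) : ℂ) • D - S) * star U := by
    conv_rhs => rw [Matrix.mul_sub, Matrix.sub_mul, mul_smul_comm, smul_mul_assoc, hUDU, hUSU]
  rw [key, Matrix.star_eq_conjTranspose]
  exact hM'psd.mul_mul_conjTranspose_same U

end exist

open Matrix ComplexOrder in
/-- Monotonicity of the max-relative entropy under CPTP maps (given via a Kraus
representation): `D_max(E(ρ)‖E(σ)) ≤ D_max(ρ‖σ)` when `supp(ρ) ⊆ supp(σ)`. -/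
theorem dmax_monotone_cptp {n m : Type*} [Fintype n] [DecidableEq n] [Fintype m] [DecidableEq m]
    (ρ σ : Matrix n n ℂ) (hρ : IsDensityMatrix ρ) (hσ : IsDensityMatrix σ)
    (hsupp : ∀ v : n → ℂ, σ *ᵥ v = 0 → ρ *ᵥ v = 0)
    (E : Matrix n n ℂ →ₗ[ℂ] Matrix m m ℂ)
    (hCP : ∃ (r : ℕ) (K : Fin r → Matrix m n ℂ), ∀ X, E X = ∑ i, K i * X * (K i)ᴴ)
    (hTP : ∀ X, (E X).trace = X.trace) :
    Dmax (E ρ) (E σ) ≤ Dmax ρ σ := by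
  classical
  obtain ⟨r, K, hK⟩ := hCP
  have hEpsd : ∀ X : Matrix n n ℂ, X.PosSemidef → (E X).PosSemidef := by
    intro X hX
    rw [hK]
    refine Finset.sum_induction _ _ (fun a b ha hb => ha.add hb) Matrix.PosSemidef.zero ?_
    intro i _
    exact hX.mul_mul_conjTranspose_same (K i)
  set Sset : Set ℝ := {l : ℝ | ((((2:ℝ)^l : ℝ) : ℂ) • σ - ρ).PosSemidef} with hSset
  set Tset : Set ℝ := {l : ℝ | ((((2:ℝ)^l : ℝ) : ℂ) • (E σ) - (E ρ)).PosSemidef} with hTset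
  have hsub : Sset ⊆ Tset := by
    intro l hl
    have h1 := hEpsd _ hl
    have h2 : E ((((2:ℝ)^l : ℝ) : ℂ) • σ - ρ) = (((2:ℝ)^l : ℝ) : ℂ) • (E σ) - E ρ := by
      rw [map_sub, _root_.map_smul]
    show ((((2:ℝ)^l : ℝ) : ℂ) • (E σ) - (E ρ)).PosSemidef
    rwa [h2] at h1
  have hne : Sset.Nonempty := by
    obtain ⟨c, hc, hpsd⟩ := exists_scale hρ.1 hσ.1 hsupp
    refine ⟨Real.logb 2 (c+1), ?_⟩
    have h2l : (2:ℝ) ^ (Real.logb 2 (c+1)) = c + 1 :=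
      Real.rpow_logb (by norm_num) (by norm_num) (by linarith)
    show ((((2:ℝ)^(Real.logb 2 (c+1)) : ℝ) : ℂ) • σ - ρ).PosSemidef
    rw [h2l]
    have heq : (((c + 1 : ℝ) : ℂ)) • σ - ρ = ((((c : ℝ)) : ℂ) • σ - ρ) + σ := by
      push_cast
      module
    rw [heq]
    exact hpsd.add hσ.1
  have hbdd : BddBelow Tset := by
    refine ⟨0, fun l hl => ?_⟩
    have hpsd : ((((2:ℝ)^l : ℝ) : ℂ) • (E σ) - (E ρ)).PosSemidef := hl
    have htr : ((((2:ℝ)^l : ℝ) : ℂ) • (E σ) - (E ρ)).trace = ((((2:ℝ)^l - 1 : ℝ)) : ℂ) := by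
      rw [Matrix.trace_sub, Matrix.trace_smul, hTP, hTP, hρ.2, hσ.2, smul_eq_mul, mul_one]
      push_cast
      ring
    have h0 := psd_trace_re_nonneg hpsd
    rw [htr, Complex.ofReal_re] at h0
    have h1 : (2:ℝ) ^ (0:ℝ) ≤ (2:ℝ) ^ l := by
      rw [Real.rpow_zero]
      linarith
    exact (Real.rpow_le_rpow_left_iff (by norm_num : (1:ℝ) < 2)).mp h1
  exact csInf_le_csInf hbdd hne hsub
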